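/- Let q be a prime power, m, n > 1 coprime integers, and k, ℓ nonnegative integers. Let α be a normal element of 𝔽_{q^m} over 𝔽_q and β a normal element of 𝔽_{q^n} over 𝔽_q. Then α^{q^k}β − αβ^{q^ℓ} is never a normal element of 𝔽_{q^{mn}} over 𝔽_q. -/

import Mathlib

/-- If `x ^ q ^ N = x`, then `x ^ q ^ (j * N + r) = x ^ q ^ r`. -/
lemma stmt19_aux_period {K : Type*} [CommRing K] (q N : ℕ) (x : K)
    (hx : x ^ q ^ N = x) : ∀ j r : ℕ, x ^ q ^ (j * N + r) = x ^ q ^ r := by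
  intro j
  induction j with
  | zero => simp
  | succ j ih =>
    intro r
    have h1 : (j + 1) * N + r = N + (j * N + r) := by ring
    rw [h1, pow_add, pow_mul, hx, ih r]

/-- If `x ^ q ^ N = x`, then `x ^ q ^ a` only depends on `a % N`. -/
lemma stmt19_aux_mod {K : Type*} [CommRing K] (q N : ℕ) (x : K)
    (hx : x ^ q ^ N = x) (a : ℕ) : x ^ q ^ a = x ^ q ^ (a % N) := by
  conv_lhs => rw [show a = a / N * N + a % N from by
    rw [Nat.div_add_mod']]
  exact stmt19_aux_period q N x hx _ _

/-- Proposition 4.8: for normal `α ∈ 𝔽_{q^m}` and `β ∈ 𝔽_{q^n}` with `gcd(m,n)=1` and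
`m, n > 1`, the element `α^{q^k}β − αβ^{q^ℓ}` is never normal in `𝔽_{q^{mn}}`. -/
theorem stmt19 (F : Type*) [Field F] [Fintype F] (q : ℕ) (hq : q = Fintype.card F)
    (m n : ℕ) (hm : 1 < m) (hn : 1 < n) (hmn : Nat.Coprime m n) (k ℓ : ℕ)
    (α β : AlgebraicClosure F)
    (hαmem : α ^ q ^ m = α)
    (hαnormal : LinearIndependent F fun i : Fin m => α ^ q ^ (i : ℕ))
    (hβmem : β ^ q ^ n = β)
    (hβnormal : LinearIndependent F fun j : Fin n => β ^ q ^ (j : ℕ)) :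
    ¬ LinearIndependent F
        fun s : Fin (m * n) => (α ^ q ^ k * β - α * β ^ q ^ ℓ) ^ q ^ (s : ℕ) := by
  set N := m * n with hN
  have hNpos : 0 < N := by positivity
  haveI : NeZero N := ⟨hNpos.ne'⟩
  -- characteristic
  set p := ringChar F with hp'
  haveI : CharP F p := ringChar.charP F
  have hp : p.Prime := CharP.char_is_prime F p
  haveI : Fact p.Prime := ⟨hp⟩
  haveI : CharP (AlgebraicClosure F) p :=
    charP_of_injective_algebraMap (algebraMap F (AlgebraicClosure F)).injective p
  obtain ⟨e, -, hcard⟩ := FiniteField.card F p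
  -- Frobenius is additive on subtraction
  have hfrob : ∀ (a b : AlgebraicClosure F) (u : ℕ),
      (a - b) ^ q ^ u = a ^ q ^ u - b ^ q ^ u := by
    intro a b u
    rw [hq, hcard, ← pow_mul]
    exact sub_pow_char_pow a b _
  -- CRT elements
  obtain ⟨s, hsk, hs0⟩ := Nat.chineseRemainder hmn k 0
  obtain ⟨t, ht0, htl⟩ := Nat.chineseRemainder hmn 0 ℓ
  set x : AlgebraicClosure F := α * β with hx
  have hxN : x ^ q ^ N = x := by
    have hα : α ^ q ^ N = α := by
      have := stmt19_aux_period q m α hαmem n 0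
      simpa [hN, mul_comm m n] using this
    have hβ : β ^ q ^ N = β := by
      have := stmt19_aux_period q n β hβmem m 0
      simpa [hN] using this
    rw [hx, mul_pow, hα, hβ]
  -- rewrite γ as x^{q^s} - x^{q^t}
  have hγ : α ^ q ^ k * β - α * β ^ q ^ ℓ = x ^ q ^ s - x ^ q ^ t := by
    have h1 : α ^ q ^ s = α ^ q ^ k := by
      rw [stmt19_aux_mod q m α hαmem s, stmt19_aux_mod q m α hαmem k, hsk]
    have h2 : β ^ q ^ s = β := by
      rw [stmt19_aux_mod q n β hβmem s, hs0]
      simp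
    have h3 : α ^ q ^ t = α := by
      rw [stmt19_aux_mod q m α hαmem t, ht0]
      simp
    have h4 : β ^ q ^ t = β ^ q ^ ℓ := by
      rw [stmt19_aux_mod q n β hβmem t, stmt19_aux_mod q n β hβmem ℓ, htl]
    rw [hx, mul_pow, mul_pow, h1, h2, h3, h4]
  -- shifted sums are all equal to the full sum
  have hshift : ∀ c : ℕ, ∑ u : Fin N, x ^ q ^ (c + (u : ℕ)) = ∑ u : Fin N, x ^ q ^ (u : ℕ) := by
    intro c
    refine Fintype.sum_equiv (Equiv.addRight ((Fin.ofNat N c))) _ _ ?_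
    intro u
    show x ^ q ^ (c + (u : ℕ)) = x ^ q ^ ((u + (Fin.ofNat N c) : Fin N) : ℕ)
    rw [stmt19_aux_mod q N x hxN (c + (u : ℕ)),
        stmt19_aux_mod q N x hxN ((u + (Fin.ofNat N c) : Fin N) : ℕ)]
    congr 1
    rw [Fin.val_add, Fin.val_ofNat, Nat.mod_mod_of_dvd _ dvd_rfl]
    have h : ((u : ℕ) + c % N) % N = ((u : ℕ) + c) % N :=
      Nat.ModEq.add_left _ (Nat.mod_modEq c N)
    rw [h, Nat.add_comm]
  -- the sum of all conjugates vanishes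
  have hsum : ∑ u : Fin N, (α ^ q ^ k * β - α * β ^ q ^ ℓ) ^ q ^ (u : ℕ) = 0 := by
    rw [hγ]
    have key : ∀ u : Fin N, (x ^ q ^ s - x ^ q ^ t) ^ q ^ (u : ℕ)
        = x ^ q ^ (s + (u : ℕ)) - x ^ q ^ (t + (u : ℕ)) := by
      intro u
      rw [hfrob, ← pow_mul, ← pow_mul, ← pow_add, ← pow_add]
    rw [Finset.sum_congr rfl fun u _ => key u, Finset.sum_sub_distrib, hshift s, hshift t,
      sub_self]
  -- conclude
  rw [Fintype.not_linearIndependent_iff]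
  exact ⟨fun _ => 1, by simpa using hsum, ⟨0, hNpos⟩, one_ne_zero⟩
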